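/- arXiv:1210.8340 — 6 statements merged into one kernel-verified Lean document; each statement's English description precedes it below -/
import Mathlib

section
/- Let R ≥ 2 be an integer, let B ⊂ ℤ be finite with 0 ∈ B, let d be the greatest common divisor of the elements of B, and let L ⊂ ℤ be finite with M = max L and m = min L. If x₀, x₁, …, x_{r−1} is a cycle for L with scaling factor R which is extreme for (B,L), then every cycle point x satisfies x ∈ (1/d)ℤ and m/(R−1) ≤ x ≤ M/(R−1). -/
open scoped Pointwise
open Matrix

/-- `m_B(x) = (1/#B) ∑_{b ∈ B} e^{2πi b x}`. -/
noncomputable def mB (B : Finset ℤ) (x : ℝ) : ℂ :=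
  (B.card : ℂ)⁻¹ * ∑ b ∈ B, Complex.exp (2 * (Real.pi : ℂ) * Complex.I * (b : ℂ) * (x : ℂ))

/-- The matrix `(1/√N)(e^{2πi b l / R})_{b ∈ B, l ∈ L}` associated with `(B, L)`. -/
noncomputable def hadamardMatrix (R : ℤ) (B L : Finset ℤ) : Matrix B L ℂ :=
  fun b l => ((1 / Real.sqrt B.card : ℝ) : ℂ) *
    Complex.exp (2 * (Real.pi : ℂ) * Complex.I * ((b : ℤ) : ℂ) * ((l : ℤ) : ℂ) / ((R : ℤ) : ℂ))

/-- `(B, L)` is a Hadamard pair with scaling factor `R`. -/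
def IsHadamardPair (R : ℤ) (B L : Finset ℤ) : Prop :=
  2 ≤ R ∧ (0 : ℤ) ∈ B ∧ (0 : ℤ) ∈ L ∧ B.card = L.card ∧
    hadamardMatrix R B L * (hadamardMatrix R B L)ᴴ = 1 ∧
    (hadamardMatrix R B L)ᴴ * hadamardMatrix R B L = 1

/-- `x₀, …, x_{r-1}` is a cycle for `L` (scaling factor `R`) with digits `l₀, …, l_{r-1}`. -/
def IsCycle (R : ℤ) (L : Finset ℤ) {r : ℕ} (x : Fin r → ℝ) (l : Fin r → ℤ) : Prop :=
  0 < r ∧ ∀ k : Fin r, l k ∈ L ∧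
    (x k + (l k : ℝ)) / (R : ℝ) = x ⟨(k.val + 1) % r, Nat.mod_lt _ k.pos⟩

/-- The cycle is extreme for `(B, L)`: `|m_B(x_k)| = 1` for all `k`. -/
def IsExtremeCycle (R : ℤ) (B L : Finset ℤ) {r : ℕ} (x : Fin r → ℝ) (l : Fin r → ℤ) : Prop :=
  IsCycle R L x l ∧ ∀ k : Fin r, ‖mB B (x k)‖ = 1

/-- All extreme cycle points for `(B, L)` are integers. -/
def ExtremeCyclesIntegral (R : ℤ) (B L : Finset ℤ) : Prop :=
  ∀ (r : ℕ) (x : Fin r → ℝ) (l : Fin r → ℤ),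
    IsExtremeCycle R B L x l → ∀ k : Fin r, ∃ n : ℤ, x k = (n : ℝ)

/-- `x` is representable in base `R` with digits in `L`. -/
def Representable (R : ℤ) (L : Finset ℤ) (x : ℤ) : Prop :=
  ∃ (X : ℕ → ℤ) (l : ℕ → ℤ), X 0 = x ∧ (∀ k, l k ∈ L) ∧ ∀ k, X k = R * X (k + 1) + l k

/-- `y` has the base-`R` representation with digit sequence `d`. -/
def RepWith (R : ℤ) (y : ℤ) (d : ℕ → ℤ) : Prop :=
  ∃ X : ℕ → ℤ, X 0 = y ∧ ∀ k, X k = R * X (k + 1) + d k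

/-- `L` is a complete set of representatives modulo `R`. -/
def IsCompleteResidues (R : ℤ) (L : Finset ℤ) : Prop :=
  ∀ x : ℤ, ∃! l, l ∈ L ∧ l ≡ x [ZMOD R]

/-- `A` and `A'` have disjoint differences: `(A - A) ∩ (A' - A') = {0}`. -/
def HasDisjointDiffs (A A' : Finset ℤ) : Prop :=
  (A - A) ∩ (A' - A') = ({0} : Finset ℤ)

/-- `(B, L)` and `(B', L')` are complementary Hadamard pairs with scaling factor `R`. -/
def IsComplementaryPair (R : ℤ) (B L B' L' : Finset ℤ) : Prop :=
  IsHadamardPair R B L ∧ IsHadamardPair R B' L' ∧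
    HasDisjointDiffs B B' ∧ HasDisjointDiffs L L' ∧
    IsCompleteResidues R (B + B') ∧ IsCompleteResidues R (L + L') ∧
    ExtremeCyclesIntegral R B L ∧ ExtremeCyclesIntegral R B' L' ∧
    (B + B').gcd id = 1


noncomputable def eTerm (t : ℝ) (b : ℤ) : ℂ :=
  Complex.exp (2 * (Real.pi : ℂ) * Complex.I * (b : ℂ) * (t : ℂ))

lemma abs_eTerm (t : ℝ) (b : ℤ) : ‖eTerm t b‖ = 1 := by
  have h : (2 * (Real.pi : ℂ) * Complex.I * (b : ℂ) * (t : ℂ))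
      = ((2 * Real.pi * b * t : ℝ) : ℂ) * Complex.I := by push_cast; ring
  rw [eTerm, h, Complex.norm_exp_ofReal_mul_I]

lemma unit_re_one {z : ℂ} (h1 : ‖z‖ = 1) (h2 : z.re = 1) : z = 1 := by
  have hsq := Complex.sq_norm z
  rw [h1, Complex.normSq_apply, h2] at hsq
  have him : z.im = 0 := by nlinarith [sq_nonneg z.im]
  exact Complex.ext h2 him

lemma gcd_mul_int (s : Finset ℤ) (x : ℝ) (h : ∀ b ∈ s, ∃ n : ℤ, (b : ℝ) * x = n) :
    ∃ n : ℤ, ((s.gcd id : ℤ) : ℝ) * x = n := by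
  induction s using Finset.induction_on with
  | empty => exact ⟨0, by simp⟩
  | @insert a s ha ih =>
    obtain ⟨p, hp⟩ := h _ (Finset.mem_insert_self _ _)
    obtain ⟨q, hq⟩ := ih (fun b hb => h b (Finset.mem_insert_of_mem hb))
    rw [Finset.gcd_insert]
    set g := s.gcd id with hg
    have hbez : (GCDMonoid.gcd (id a) g : ℤ)
        = a * Int.gcdA a g + g * Int.gcdB a g := by
      have h1 : (Int.gcd a g : ℤ) = GCDMonoid.gcd a g := rfl
      simp only [id_eq]
      rw [← h1, Int.gcd_eq_gcd_ab]
    refine ⟨Int.gcdA a g * p + Int.gcdB a g * q, ?_⟩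
    rw [hbez]
    push_cast
    rw [← hp, ← hq]; ring

lemma term_eq_one (B : Finset ℤ) (h0B : (0 : ℤ) ∈ B) (t : ℝ)
    (habs : ‖mB B t‖ = 1) :
    ∀ b ∈ B, eTerm t b = 1 := by
  classical
  have hB : B.Nonempty := ⟨0, h0B⟩
  have hN : (0 : ℝ) < B.card := by exact_mod_cast hB.card_pos
  have hS : ‖∑ b ∈ B, eTerm t b‖ = B.card := by
    have h1 : ‖mB B t‖
        = (B.card : ℝ)⁻¹ * ‖∑ b ∈ B, eTerm t b‖ := by
      rw [mB, norm_mul, norm_inv, Complex.norm_natCast]; rfl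
    rw [h1] at habs
    field_simp at habs
    linarith [habs]
  set S := ∑ b ∈ B, eTerm t b with hSdef
  have hnormSq : ((S * (starRingEnd ℂ) S).re) = (B.card : ℝ) ^ 2 := by
    rw [Complex.mul_conj, Complex.ofReal_re, ← Complex.sq_norm, hS]
  have hexpand : S * (starRingEnd ℂ) S
      = ∑ p ∈ B ×ˢ B, eTerm t p.1 * (starRingEnd ℂ) (eTerm t p.2) := by
    rw [hSdef, map_sum, Finset.sum_mul_sum, Finset.sum_product]
  have hre : ∑ p ∈ B ×ˢ B, (eTerm t p.1 * (starRingEnd ℂ) (eTerm t p.2)).re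
      = ∑ p ∈ B ×ˢ B, (1 : ℝ) := by
    rw [← Complex.re_sum, ← hexpand, hnormSq]
    simp [Finset.sum_const, sq]
  have hle : ∀ p ∈ B ×ˢ B, (eTerm t p.1 * (starRingEnd ℂ) (eTerm t p.2)).re ≤ 1 := by
    intro p _
    calc (eTerm t p.1 * (starRingEnd ℂ) (eTerm t p.2)).re
        ≤ ‖eTerm t p.1 * (starRingEnd ℂ) (eTerm t p.2)‖ := Complex.re_le_norm _
      _ = 1 := by rw [norm_mul, Complex.norm_conj, abs_eTerm, abs_eTerm, one_mul]
  have hall := (Finset.sum_eq_sum_iff_of_le hle).mp hre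
  intro b hb
  have hp : ((b, (0:ℤ)) : ℤ × ℤ) ∈ B ×ˢ B := Finset.mk_mem_product hb h0B
  have hb1 := hall _ hp
  have he0 : eTerm t 0 = 1 := by rw [eTerm]; simp
  rw [he0, _root_.map_one, mul_one] at hb1
  exact unit_re_one (abs_eTerm t b) hb1

/-- Every point `x` of an extreme cycle for `(B, L)` satisfies
`x ∈ (1/d)ℤ` (i.e. `d·x ∈ ℤ` where `d = gcd B`) and `m/(R-1) ≤ x ≤ M/(R-1)`. -/
theorem extreme_cycle_point_bounds (R : ℤ) (hR : 2 ≤ R) (B : Finset ℤ) (h0B : (0 : ℤ) ∈ B)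
    (L : Finset ℤ) (hL : L.Nonempty) (r : ℕ) (x : Fin r → ℝ) (l : Fin r → ℤ)
    (hc : IsExtremeCycle R B L x l) :
    ∀ k : Fin r,
      (∃ n : ℤ, ((B.gcd id : ℤ) : ℝ) * x k = (n : ℝ)) ∧
      ((L.min' hL : ℝ) / ((R : ℝ) - 1) ≤ x k ∧ x k ≤ ((L.max' hL : ℝ) / ((R : ℝ) - 1))) := by
  obtain ⟨⟨hr, hstep⟩, hext⟩ := hc
  have hRR : (2 : ℝ) ≤ (R : ℝ) := by exact_mod_cast hR
  have hR1 : (0 : ℝ) < (R : ℝ) - 1 := by linarith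
  have hR0 : ((R : ℝ)) ≠ 0 := by linarith
  have hsurj : ∀ y : Fin r, ∃ k : Fin r,
      (⟨(k.val + 1) % r, Nat.mod_lt _ k.pos⟩ : Fin r) = y := by
    have hinj : Function.Injective
        (fun k : Fin r => (⟨(k.val + 1) % r, Nat.mod_lt _ k.pos⟩ : Fin r)) := by
      intro a b hab
      have h : (a.val + 1) % r = (b.val + 1) % r := congrArg Fin.val hab
      have h2 : a.val % r = b.val % r := Nat.ModEq.add_right_cancel' 1 h
      rw [Nat.mod_eq_of_lt a.isLt, Nat.mod_eq_of_lt b.isLt] at h2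
      exact Fin.ext h2
    exact Finite.surjective_of_injective hinj
  have hstep' : ∀ k : Fin r, x k + (l k : ℝ)
      = (R : ℝ) * x ⟨(k.val + 1) % r, Nat.mod_lt _ k.pos⟩ := by
    intro k
    have h := (hstep k).2
    field_simp at h
    linarith [h]
  obtain ⟨j, -, hj⟩ := Finset.exists_max_image Finset.univ x ⟨⟨0, hr⟩, Finset.mem_univ _⟩
  obtain ⟨i, -, hi⟩ := Finset.exists_min_image Finset.univ x ⟨⟨0, hr⟩, Finset.mem_univ _⟩
  have hjb : x j ≤ (L.max' hL : ℝ) / ((R : ℝ) - 1) := by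
    obtain ⟨k, hk⟩ := hsurj j
    have h1 := hstep' k
    rw [hk] at h1
    have h2 : (l k : ℝ) ≤ (L.max' hL : ℝ) := by
      exact_mod_cast L.le_max' _ (hstep k).1
    have h3 : x k ≤ x j := hj _ (Finset.mem_univ _)
    rw [le_div_iff₀ hR1]
    nlinarith
  have hib : (L.min' hL : ℝ) / ((R : ℝ) - 1) ≤ x i := by
    obtain ⟨k, hk⟩ := hsurj i
    have h1 := hstep' k
    rw [hk] at h1
    have h2 : (L.min' hL : ℝ) ≤ (l k : ℝ) := by
      exact_mod_cast L.min'_le _ (hstep k).1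
    have h3 : x i ≤ x k := hi _ (Finset.mem_univ _)
    rw [div_le_iff₀ hR1]
    nlinarith
  intro k
  refine ⟨?_, le_trans hib (hi _ (Finset.mem_univ _)), le_trans (hj _ (Finset.mem_univ _)) hjb⟩
  apply gcd_mul_int
  intro b hb
  have hone := term_eq_one B h0B (x k) (hext k) b hb
  rw [eTerm, Complex.exp_eq_one_iff] at hone
  obtain ⟨n, hn⟩ := hone
  refine ⟨n, ?_⟩
  have h2pi : (2 * (Real.pi : ℂ) * Complex.I) ≠ 0 := by
    simp [Real.pi_ne_zero, Complex.I_ne_zero]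
  have hc2 : ((b : ℝ) * x k : ℂ) = (n : ℂ) := by
    apply mul_left_cancel₀ h2pi
    push_cast
    linear_combination hn
  exact_mod_cast hc2
end

section
/- Let R ≥ 2 be an integer and let L ⊂ ℤ be a complete set of representatives modulo R. Then every integer x has a unique representation in base R using digits in L, i.e., there exist unique sequences of integers x₀ = x, x₁, x₂, … and digits l₀, l₁, … ∈ L with x_k = R x_{k+1} + l_k for all k ≥ 0. Moreover this representation is eventually periodic: there exist n₀ ≥ 0 and r ≥ 1 such that l_{n+r} = l_n for all n ≥ n₀. -/
open scoped Pointwise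
open Matrix

private lemma digit_unique {R : ℤ} {L : Finset ℤ} (hL : IsCompleteResidues R L)
    {a b : ℤ} (ha : a ∈ L) (hb : b ∈ L) (h : a ≡ b [ZMOD R]) : a = b := by
  obtain ⟨l, _, hu⟩ := hL b
  rw [hu a ⟨ha, h⟩, hu b ⟨hb, Int.ModEq.refl b⟩]

private lemma digit_cong {R : ℤ} {Y m : ℕ → ℤ}
    (hY : ∀ k, Y k = R * Y (k + 1) + m k) (k : ℕ) : m k ≡ Y k [ZMOD R] :=
  Int.modEq_iff_dvd.mpr ⟨Y (k + 1), by linarith [hY k]⟩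

private lemma step_det {R : ℤ} (hR : 2 ≤ R) {L : Finset ℤ} (hL : IsCompleteResidues R L)
    {X X' l l' : ℕ → ℤ} (hl : ∀ k, l k ∈ L) (hl' : ∀ k, l' k ∈ L)
    (hX : ∀ k, X k = R * X (k + 1) + l k) (hX' : ∀ k, X' k = R * X' (k + 1) + l' k)
    {a b : ℕ} (h : X a = X' b) : l a = l' b ∧ X (a + 1) = X' (b + 1) := by
  have hll : l a = l' b := by
    apply digit_unique hL (hl a) (hl' b)
    have h1 := digit_cong hX a
    have h2 := digit_cong hX' b
    rw [h] at h1
    exact h1.trans h2.symm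
  refine ⟨hll, mul_left_cancel₀ (by omega : R ≠ 0) ?_⟩
  have h1 := hX a; have h2 := hX' b
  omega

/-- If `L` is a complete set of representatives mod `R`, every integer has a
unique base-`R` representation with digits in `L`, and any such representation is eventually
periodic. -/
theorem unique_eventually_periodic_representation (R : ℤ) (hR : 2 ≤ R) (L : Finset ℤ)
    (hL : IsCompleteResidues R L) (x : ℤ) :
    (∃! p : (ℕ → ℤ) × (ℕ → ℤ),
      p.1 0 = x ∧ (∀ k, p.2 k ∈ L) ∧ ∀ k, p.1 k = R * p.1 (k + 1) + p.2 k) ∧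
    (∀ X l : ℕ → ℤ, X 0 = x → (∀ k, l k ∈ L) → (∀ k, X k = R * X (k + 1) + l k) →
      ∃ (n₀ r : ℕ), 1 ≤ r ∧ ∀ n, n₀ ≤ n → l (n + r) = l n) := by
  classical
  constructor
  · -- existence and uniqueness
    choose d hd using fun y => (hL y).exists
    have hdvd : ∀ y : ℤ, R ∣ y - d y := fun y => (Int.modEq_iff_dvd.mp (hd y).2)
    set X : ℕ → ℤ := fun k => Nat.rec x (fun _ y => (y - d y) / R) k with hXdef
    have hXsucc : ∀ k, X (k + 1) = (X k - d (X k)) / R := fun k => rfl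
    have hXrec : ∀ k, X k = R * X (k + 1) + d (X k) := by
      intro k
      rw [hXsucc k, Int.mul_ediv_cancel' (hdvd (X k))]
      ring
    refine ⟨⟨X, fun k => d (X k)⟩, ⟨rfl, fun k => (hd (X k)).1, hXrec⟩, ?_⟩
    rintro ⟨Y, m⟩ ⟨hY0, hm, hYrec⟩
    have hXeq : ∀ n, Y n = X n := by
      intro n
      induction n with
      | zero => exact hY0
      | succ n ih =>
        exact (step_det hR hL hm (fun k => (hd (X k)).1) hYrec hXrec ih).2
    have hleq : ∀ n, m n = d (X n) := fun n =>
      (step_det hR hL hm (fun k => (hd (X k)).1) hYrec hXrec (hXeq n)).1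
    exact Prod.ext (funext hXeq) (funext hleq)
  · -- eventual periodicity
    intro X l hX0 hl hXrec
    set C : ℤ := ∑ a ∈ L, |a| with hC
    have hCL : ∀ a ∈ L, |a| ≤ C := fun a ha =>
      Finset.single_le_sum (f := fun a => |a|) (fun b _ => abs_nonneg b) ha
    have hC0 : 0 ≤ C := Finset.sum_nonneg fun b _ => abs_nonneg b
    set M : ℤ := |x| + C with hM
    have hbound : ∀ k, |X k| ≤ M := by
      intro k
      induction k with
      | zero => rw [hX0]; simp [hM, hC0]
      | succ k ih =>
        have h1 : R * X (k + 1) = X k - l k := by linarith [hXrec k]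
        have h2 : |R * X (k + 1)| ≤ M + C := by
          rw [h1]
          calc |X k - l k| ≤ |X k| + |l k| := abs_sub _ _
            _ ≤ M + C := add_le_add ih (hCL _ (hl k))
        rw [abs_mul] at h2
        have h3 : (2 : ℤ) ≤ |R| := by rw [abs_of_nonneg (by omega)]; exact hR
        nlinarith [abs_nonneg (X (k + 1)), abs_nonneg x]
    have hfin : (Set.Icc (-M) M).Finite := Set.finite_Icc _ _
    obtain ⟨i, j, hij, hXij⟩ :=
      Set.Finite.exists_lt_map_eq_of_forall_mem (f := X)
        (fun n => Set.mem_Icc.mpr (abs_le.mp (hbound n))) hfin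
    refine ⟨i, j - i, by omega, ?_⟩
    have key : ∀ m : ℕ, X (i + m + (j - i)) = X (i + m) ∧ l (i + m + (j - i)) = l (i + m) := by
      intro m
      induction m with
      | zero =>
        have h0 : i + 0 + (j - i) = j := by omega
        rw [h0]
        simp only [Nat.add_zero]
        exact ⟨hXij.symm, (step_det hR hL hl hl hXrec hXrec hXij.symm).1⟩
      | succ m ih =>
        have h1 : i + (m + 1) + (j - i) = (i + m + (j - i)) + 1 := by omega
        have h2 : i + (m + 1) = (i + m) + 1 := by omega
        rw [h1, h2]
        obtain ⟨_, hx⟩ := step_det hR hL hl hl hXrec hXrec ih.1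
        exact ⟨hx, (step_det hR hL hl hl hXrec hXrec hx).1⟩
    intro n hn
    obtain ⟨m, rfl⟩ := Nat.exists_eq_add_of_le hn
    exact (key m).2
end

section
/- Let (B, L) be a Hadamard pair with scaling factor R such that all extreme cycle points for (B, L) are integers. Let Λ(L) be the smallest subset of ℝ which contains −x for every point x of every extreme cycle for (B, L) and which satisfies RΛ(L) + L ⊆ Λ(L). Then Λ(L) equals the set of all integers which can be represented in base R using digits in L. -/
open scoped Pointwise
open Matrix

lemma mB_int (B : Finset ℤ) (hB : B.Nonempty) (z : ℤ) : mB B (z : ℝ) = 1 := by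
  have h : ∀ b ∈ B, Complex.exp (2 * (Real.pi : ℂ) * Complex.I * (b : ℂ) * ((z : ℝ) : ℂ)) = 1 := by
    intro b _
    have e : 2 * (Real.pi : ℂ) * Complex.I * (b : ℂ) * ((z : ℝ) : ℂ)
        = ((b * z : ℤ) : ℂ) * (2 * Real.pi * Complex.I) := by push_cast; ring
    rw [e, Complex.exp_int_mul_two_pi_mul_I]
  have hc : (B.card : ℂ) ≠ 0 := by
    exact_mod_cast Nat.cast_ne_zero.mpr (Finset.card_ne_zero.mpr hB)
  unfold mB
  rw [Finset.sum_congr rfl h, Finset.sum_const, nsmul_eq_mul, mul_one, inv_mul_cancel₀ hc]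

lemma mod_succ_aux (k j r : ℕ) : (k + (j+1)) % r = ((k+j) % r + 1) % r := by
  have e : k + (j+1) = (k+j) + 1 := by omega
  rw [e, Nat.add_mod (k+j) 1 r]
  conv_rhs => rw [Nat.add_mod ((k+j)%r) 1 r, Nat.mod_mod_of_dvd _ dvd_rfl]

/-- For a Hadamard pair `(B, L)` with all extreme cycle points integral, the
set `Λ(L)` — the smallest subset of `ℝ` containing `-x` for every extreme cycle point `x` and
satisfying `RΛ(L) + L ⊆ Λ(L)` — is exactly the set of integers representable in base `R` with
digits in `L`. -/
theorem spectrum_eq_representable (R : ℤ) (B L : Finset ℤ) (hBL : IsHadamardPair R B L)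
    (hcyc : ExtremeCyclesIntegral R B L) (Λ : Set ℝ)
    (hmem : ∀ (r : ℕ) (x : Fin r → ℝ) (l : Fin r → ℤ),
      IsExtremeCycle R B L x l → ∀ k : Fin r, -(x k) ∈ Λ)
    (hinv : ∀ y ∈ Λ, ∀ m ∈ L, (R : ℝ) * y + (m : ℝ) ∈ Λ)
    (hmin : ∀ S : Set ℝ,
      (∀ (r : ℕ) (x : Fin r → ℝ) (l : Fin r → ℤ),
        IsExtremeCycle R B L x l → ∀ k : Fin r, -(x k) ∈ S) →
      (∀ y ∈ S, ∀ m ∈ L, (R : ℝ) * y + (m : ℝ) ∈ S) → Λ ⊆ S) :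
    Λ = {y : ℝ | ∃ n : ℤ, (n : ℝ) = y ∧ Representable R L n} := by
  obtain ⟨hR, hB0, hL0, -, -, -⟩ := hBL
  have hR0 : (R : ℝ) ≠ 0 := by
    have : (0:ℝ) < (R:ℝ) := by exact_mod_cast lt_of_lt_of_le (by norm_num) hR
    linarith
  apply Set.Subset.antisymm
  · -- Λ ⊆ representable
    apply hmin
    · -- extreme cycle points are representable
      intro r x l hex k
      have hr := hex.1.1
      have hcy := hex.1.2
      choose n hn using hcyc r x l hex
      refine ⟨-(n k), by rw [hn k]; push_cast; ring, ?_⟩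
      refine ⟨fun j => -(n ⟨(k.val + j) % r, Nat.mod_lt _ hr⟩),
        fun j => l ⟨(k.val + j) % r, Nat.mod_lt _ hr⟩, ?_, fun j => (hcy _).1, fun j => ?_⟩
      · show -(n ⟨(k.val + 0) % r, Nat.mod_lt _ hr⟩) = -(n k)
        congr 1
        apply congrArg
        apply Fin.ext
        simp [Nat.mod_eq_of_lt k.isLt]
      · set i : Fin r := ⟨(k.val + j) % r, Nat.mod_lt _ hr⟩ with hidef
        set i' : Fin r := ⟨(k.val + (j+1)) % r, Nat.mod_lt _ hr⟩ with hi'def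
        have hii : i' = ⟨(i.val + 1) % r, Nat.mod_lt _ i.pos⟩ := by
          apply Fin.ext
          exact mod_succ_aux k.val j r
        have h2 := (hcy i).2
        rw [hn, hn, ← hii, div_eq_iff hR0] at h2
        have h4 : n i + l i = R * n i' := by
          have hh : (n i : ℝ) + (l i : ℝ) = (R : ℝ) * (n i' : ℝ) := by rw [h2]; ring
          exact_mod_cast hh
        show -(n i) = R * -(n i') + l i
        linarith
    · -- closure
      rintro y ⟨m0, hm0, X, l, h0, hl, hrec⟩ m hm
      refine ⟨R * m0 + m, by rw [← hm0]; push_cast; ring,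
        fun k => Nat.casesOn k (R * m0 + m) X, fun k => Nat.casesOn k m l, rfl,
        fun k => ?_, fun k => ?_⟩
      · cases k with
        | zero => exact hm
        | succ k => exact hl k
      · cases k with
        | zero => show R * m0 + m = R * X 0 + m; rw [h0]
        | succ k => exact hrec k
  · -- representable ⊆ Λ
    rintro y ⟨nn, hnn, X, l, h0, hlmem, hrec⟩
    -- bound
    set M : ℤ := L.sup' ⟨0, hL0⟩ (fun a => |a|) with hMdef
    have hM : ∀ m ∈ L, |m| ≤ M := fun m hm => Finset.le_sup' _ hm
    have hM0 : 0 ≤ M := le_trans (abs_nonneg (0:ℤ)) (hM 0 hL0)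
    set C : ℤ := max M |X 0| with hCdef
    have hMC : M ≤ C := le_max_left _ _
    have hbd : ∀ k, |X k| ≤ C := by
      intro k
      induction k with
      | zero => exact le_max_right _ _
      | succ k ih =>
        have h1 : R * X (k+1) = X k - l k := by linarith [hrec k]
        have h2 : |R * X (k+1)| ≤ C + M := by
          rw [h1]
          exact le_trans (abs_sub _ _) (add_le_add ih (hM _ (hlmem k)))
        have h3 : |R * X (k+1)| = R * |X (k+1)| := by
          rw [abs_mul, abs_of_pos (by linarith : (0:ℤ) < R)]
        have h4 : 2 * |X (k+1)| ≤ R * |X (k+1)| :=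
          mul_le_mul_of_nonneg_right hR (abs_nonneg _)
        linarith
    -- pigeonhole
    have hmaps : ∀ k : ℕ, X k ∈ Finset.Icc (-C) C :=
      fun k => Finset.mem_Icc.mpr (abs_le.mp (hbd k))
    obtain ⟨a0, -, b0, -, hne, heq0⟩ :=
      Finset.exists_ne_map_eq_of_card_lt_of_maps_to
        (s := Finset.range ((Finset.Icc (-C) C).card + 1)) (t := Finset.Icc (-C) C)
        (by simp) (fun k _ => hmaps k)
    obtain ⟨a, b, hab, heq⟩ : ∃ a b : ℕ, a < b ∧ X a = X b := by
      rcases lt_or_gt_of_ne hne with h | h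
      · exact ⟨a0, b0, h, heq0⟩
      · exact ⟨b0, a0, h, heq0.symm⟩
    set r : ℕ := b - a with hrdef
    have hr : 0 < r := by omega
    set x : Fin r → ℝ := fun j => -(X (a + j.val) : ℝ) with hxdef
    set l' : Fin r → ℤ := fun j => l (a + j.val) with hl'def
    have hkey : ∀ k : Fin r, X (a + (k.val + 1) % r) = X (a + k.val + 1) := by
      intro k
      by_cases h : k.val + 1 < r
      · rw [Nat.mod_eq_of_lt h]
        congr 1
      · have h1 : k.val + 1 = r := by have := k.isLt; omega
        have h2 : a + k.val + 1 = b := by omega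
        rw [h1, Nat.mod_self, h2]
        simpa using heq
    have hrecR : ∀ k : ℕ, (X k : ℝ) = (R : ℝ) * (X (k+1) : ℝ) + (l k : ℝ) := by
      intro k; exact_mod_cast congrArg (Int.cast : ℤ → ℝ) (hrec k)
    have hcycle : IsExtremeCycle R B L x l' := by
      refine ⟨⟨hr, fun k => ⟨hlmem _, ?_⟩⟩, fun k => ?_⟩
      · show (x k + (l (a + k.val) : ℝ)) / (R : ℝ) = x ⟨(k.val + 1) % r, Nat.mod_lt _ k.pos⟩
        simp only [hxdef]
        rw [hkey k, div_eq_iff hR0]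
        have := hrecR (a + k.val)
        linear_combination -this
      · have : x k = ((-(X (a + k.val)) : ℤ) : ℝ) := by simp [hxdef]
        rw [this, mB_int B ⟨0, hB0⟩]
        simp
    have hXa : ((X a : ℝ)) ∈ Λ := by
      have h := hmem r x l' hcycle ⟨0, hr⟩
      simpa [hxdef] using h
    have back : ∀ d : ℕ, ((X d : ℝ)) ∈ Λ → ((X 0 : ℝ)) ∈ Λ := by
      intro d
      induction d with
      | zero => exact id
      | succ d ih =>
        intro hd
        apply ih
        have := hinv _ hd (l d) (hlmem d)
        rwa [← hrecR d] at this
    have := back a hXa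
    rw [h0] at this
    rwa [hnn] at this
end

section
/- Let (B, L) and (B', L') be complementary Hadamard pairs with scaling factor R. Let Λ(L) be the set of integers representable in base R using digits in L, and Λ(L') the set of integers representable in base R using digits in L'. Then Λ(L) and Λ(L') have disjoint differences: (Λ(L) − Λ(L)) ∩ (Λ(L') − Λ(L')) = {0}. -/
open scoped Pointwise
open Matrix

/-- For complementary Hadamard pairs `(B, L)` and `(B', L')`, the sets
`Λ(L)` and `Λ(L')` of integers representable in base `R` with digits in `L`, resp. `L'`,
have disjoint differences. -/
theorem spectra_disjoint_differences (R : ℤ) (B L B' L' : Finset ℤ)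
    (h : IsComplementaryPair R B L B' L') :
    ({x : ℤ | Representable R L x} - {x : ℤ | Representable R L x}) ∩
      ({x : ℤ | Representable R L' x} - {x : ℤ | Representable R L' x}) = ({0} : Set ℤ) := by
  obtain ⟨hp, hp', -, hLLdd, -, hLLres, -, -, -⟩ := h
  obtain ⟨hR, -, h0L, -, -, -⟩ := hp
  obtain ⟨-, -, h0L', -, -, -⟩ := hp'
  ext x
  simp only [Set.mem_inter_iff, Set.mem_singleton_iff]
  constructor
  · rintro ⟨hx1, hx2⟩
    rw [Set.mem_sub] at hx1 hx2
    obtain ⟨a, ha, c, hc, hac⟩ := hx1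
    obtain ⟨a', ha', c', hc', hac'⟩ := hx2
    simp only [Set.mem_setOf_eq] at ha hc ha' hc'
    obtain ⟨Xa, la, hXa0, hla, hXa⟩ := ha
    obtain ⟨Xc, lc, hXc0, hlc, hXc⟩ := hc
    obtain ⟨Xa', la', hXa'0, hla', hXa'⟩ := ha'
    obtain ⟨Xc', lc', hXc'0, hlc', hXc'⟩ := hc'
    -- key: the two sums agree at every level
    have key : ∀ k, Xa k + Xc' k = Xc k + Xa' k := by
      intro k
      induction k with
      | zero => rw [hXa0, hXc0, hXa'0, hXc'0]; linarith
      | succ k ih =>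
        obtain ⟨u, -, huniq⟩ := hLLres (Xa k + Xc' k)
        have hmem1 : la k + lc' k ∈ L + L' := Finset.add_mem_add (hla k) (hlc' k)
        have hmem2 : lc k + la' k ∈ L + L' := Finset.add_mem_add (hlc k) (hla' k)
        have hc1 : la k + lc' k ≡ Xa k + Xc' k [ZMOD R] := by
          rw [Int.modEq_iff_dvd]
          exact ⟨Xa (k+1) + Xc' (k+1), by rw [mul_add]; linarith [hXa k, hXc' k]⟩
        have hc2 : lc k + la' k ≡ Xa k + Xc' k [ZMOD R] := by
          rw [Int.modEq_iff_dvd]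
          exact ⟨Xc (k+1) + Xa' (k+1), by rw [mul_add]; linarith [hXc k, hXa' k, ih]⟩
        have e1 : la k + lc' k = u := huniq _ ⟨hmem1, hc1⟩
        have e2 : lc k + la' k = u := huniq _ ⟨hmem2, hc2⟩
        have hRne : R ≠ 0 := by omega
        have hsum : R * (Xa (k+1) + Xc' (k+1)) = R * (Xc (k+1) + Xa' (k+1)) := by
          rw [mul_add, mul_add]
          linarith [hXa k, hXc' k, hXc k, hXa' k]
        exact mul_left_cancel₀ hRne hsum
    -- digits differences vanish
    have hdig : ∀ k, la k = lc k := by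
      intro k
      have h1 := hXa k; have h2 := hXc k; have h3 := hXa' k; have h4 := hXc' k
      have hk := key k; have hk1 := key (k+1)
      have hk1' : R * (Xa (k+1) + Xc' (k+1)) = R * (Xc (k+1) + Xa' (k+1)) := by rw [hk1]
      simp only [mul_add] at hk1'
      have hδ : la k - lc k = la' k - lc' k := by linarith
      have hm1 : la k - lc k ∈ L - L := Finset.sub_mem_sub (hla k) (hlc k)
      have hm2 : la k - lc k ∈ L' - L' := by
        rw [hδ]; exact Finset.sub_mem_sub (hla' k) (hlc' k)
      have : la k - lc k ∈ (L - L) ∩ (L' - L') := Finset.mem_inter.mpr ⟨hm1, hm2⟩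
      rw [hLLdd] at this
      have := Finset.mem_singleton.mp this
      omega
    -- so differences scale by R
    have hpow : ∀ k, x = R ^ k * (Xa k - Xc k) := by
      intro k
      induction k with
      | zero => simp [hXa0, hXc0]; omega
      | succ k ih =>
        have h1 := hXa k; have h2 := hXc k; have hd := hdig k
        have : Xa k - Xc k = R * (Xa (k+1) - Xc (k+1)) := by linarith
        rw [ih, this, pow_succ]; ring
    by_contra hx0
    set k := x.natAbs with hk
    have hDne : Xa k - Xc k ≠ 0 := by
      intro h0
      rw [hpow k, h0, mul_zero] at hx0
      exact hx0 rfl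
    have h1 : (1 : ℤ) ≤ |Xa k - Xc k| := Int.one_le_abs (by omega)
    have h2 : (2 : ℤ) ^ k ≤ |R| ^ k := by
      exact pow_le_pow_left₀ (by norm_num) (le_trans hR (le_abs_self R)) k
    have h3 : |x| = |R| ^ k * |Xa k - Xc k| := by
      rw [hpow k, abs_mul, abs_pow]
    have h4 : (2 : ℤ) ^ k ≤ |x| := by
      calc (2:ℤ)^k = 2^k * 1 := by ring
        _ ≤ |R|^k * |Xa k - Xc k| := by
            apply mul_le_mul h2 h1 (by norm_num) (by positivity)
        _ = |x| := h3.symm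
    have h5 : (k : ℤ) < 2 ^ k := by exact_mod_cast (Nat.lt_two_pow_self (n := k))
    have h6 : |x| = (k : ℤ) := by rw [hk]; exact (Int.abs_eq_natAbs x)
    linarith
  · rintro rfl
    have hrep : ∀ (M : Finset ℤ), (0:ℤ) ∈ M → Representable R M 0 := by
      intro M h0
      exact ⟨fun _ => 0, fun _ => 0, rfl, fun _ => h0, fun _ => by ring⟩
    constructor <;> rw [Set.mem_sub] <;>
      [exact ⟨0, hrep L h0L, 0, hrep L h0L, by ring⟩;
       exact ⟨0, hrep L' h0L', 0, hrep L' h0L', by ring⟩]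
end

section
/- For a Hadamard matrix H define its set of invariants T(H) = { H_{j,k} · conj(H_{n,k}) · H_{n,m} · conj(H_{j,m}) : j, k, n, m indices }. If A and B are equivalent Hadamard matrices, then T(A) = T(B). -/
open Matrix
open scoped ComplexConjugate

/-- An `N × N` complex matrix is a Hadamard matrix if it is unitary and all its entries have
absolute value `1/√N`. -/
def IsHadamardMatrix {N : ℕ} (H : Matrix (Fin N) (Fin N) ℂ) : Prop :=
  H ∈ Matrix.unitaryGroup (Fin N) ℂ ∧
    ∀ i j, ‖H i j‖ = 1 / Real.sqrt N

/-- Two Hadamard matrices are equivalent: `H' i j = cᵢ dⱼ H (π i) (ρ j)` for permutations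
`π, ρ` and unimodular constants `cᵢ, dⱼ`. -/
def HadamardEquivalent {N : ℕ} (H H' : Matrix (Fin N) (Fin N) ℂ) : Prop :=
  ∃ (π ρ : Equiv.Perm (Fin N)) (c d : Fin N → ℂ),
    (∀ i, ‖c i‖ = 1) ∧ (∀ j, ‖d j‖ = 1) ∧
    ∀ i j, H' i j = c i * d j * H (π i) (ρ j)

/-- The standard `N × N` Hadamard matrix `(1/√N)(e^{2πi jk/N})`. -/
noncomputable def stdHadamard (N : ℕ) : Matrix (Fin N) (Fin N) ℂ :=
  fun j k => ((1 / Real.sqrt N : ℝ) : ℂ) *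
    Complex.exp (2 * (Real.pi : ℂ) * Complex.I * (j : ℕ) * (k : ℕ) / (N : ℂ))

/-- The invariants `T(H) = {H_{j,k} conj(H_{n,k}) H_{n,m} conj(H_{j,m})}` of a matrix. -/
def invariants {N : ℕ} (H : Matrix (Fin N) (Fin N) ℂ) : Set ℂ :=
  {z : ℂ | ∃ j k n m : Fin N, z = H j k * conj (H n k) * H n m * conj (H j m)}

/-- Equivalent Hadamard matrices have the same invariants. -/
theorem invariants_eq_of_equivalent (N : ℕ) (A B : Matrix (Fin N) (Fin N) ℂ)
    (hA : IsHadamardMatrix A) (hB : IsHadamardMatrix B)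
    (h : HadamardEquivalent A B) : invariants A = invariants B := by
  obtain ⟨π, ρ, c, d, hc, hd, hE⟩ := h
  have hu : ∀ z : ℂ, ‖z‖ = 1 → z * conj z = 1 := by
    intro z hz
    rw [Complex.mul_conj]
    norm_cast
    rw [Complex.normSq_eq_norm_sq, hz]; norm_num
  ext z
  constructor
  · rintro ⟨j, k, n, m, rfl⟩
    refine ⟨π.symm j, ρ.symm k, π.symm n, ρ.symm m, ?_⟩
    rw [hE, hE, hE, hE]
    simp only [Equiv.apply_symm_apply, _root_.map_mul]
    have e1 := hu _ (hc (π.symm j)); have e2 := hu _ (hc (π.symm n))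
    have e3 := hu _ (hd (ρ.symm k)); have e4 := hu _ (hd (ρ.symm m))
    set a := c (π.symm j); set b := c (π.symm n)
    set u := d (ρ.symm k); set v := d (ρ.symm m)
    have : a * u * A j k * (conj b * conj u * conj (A n k)) * (b * v * A n m) *
        (conj a * conj v * conj (A j m)) = (a * conj a) * (b * conj b) * (u * conj u) *
        (v * conj v) * (A j k * conj (A n k) * A n m * conj (A j m)) := by ring
    rw [this, e1, e2, e3, e4]; ring
  · rintro ⟨j, k, n, m, rfl⟩
    refine ⟨π j, ρ k, π n, ρ m, ?_⟩
    rw [hE, hE, hE, hE]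
    simp only [_root_.map_mul]
    have e1 := hu _ (hc j); have e2 := hu _ (hc n)
    have e3 := hu _ (hd k); have e4 := hu _ (hd m)
    have : c j * d k * A (π j) (ρ k) * (conj (c n) * conj (d k) * conj (A (π n) (ρ k))) *
        (c n * d m * A (π n) (ρ m)) * (conj (c j) * conj (d m) * conj (A (π j) (ρ m))) =
        (c j * conj (c j)) * (c n * conj (c n)) * (d k * conj (d k)) * (d m * conj (d m)) *
        (A (π j) (ρ k) * conj (A (π n) (ρ k)) * A (π n) (ρ m) * conj (A (π j) (ρ m))) := by ring
    rw [this, e1, e2, e3, e4]; ring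
end

section
/- Let (B, L) and (F, G) be Hadamard pairs of sets of integers with the same scaling factor R, and suppose that b·g is a multiple of R for every b ∈ B and g ∈ G. Then the sums B + F and L + G are direct (i.e., B, F have disjoint differences and L, G have disjoint differences) and (B ⊕ F, L ⊕ G) is a Hadamard pair with scaling factor R. -/
open scoped Pointwise
open Matrix

section Aux

noncomputable def ch (R n : ℤ) : ℂ :=
  Complex.exp (2 * (Real.pi : ℂ) * Complex.I * (n : ℂ) / (R : ℂ))

lemma ch_add (R m n : ℤ) : ch R (m + n) = ch R m * ch R n := by
  rw [ch, ch, ch, ← Complex.exp_add]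
  congr 1
  push_cast
  ring

lemma ch_zero (R : ℤ) : ch R 0 = 1 := by simp [ch]

lemma star_ch (R n : ℤ) : star (ch R n) = ch R (-n) := by
  rw [ch, ch, Complex.star_def, ← Complex.exp_conj]
  congr 1
  simp only [map_div₀, _root_.map_mul, Complex.conj_I, Complex.conj_ofReal, map_ofNat,
    map_intCast]
  push_cast
  ring

lemma ch_dvd (R n : ℤ) (hR : R ≠ 0) (h : R ∣ n) : ch R n = 1 := by
  obtain ⟨k, rfl⟩ := h
  have hRC : (R : ℂ) ≠ 0 := Int.cast_ne_zero.mpr hR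
  rw [ch, show (2 * (Real.pi : ℂ) * Complex.I * ((R * k : ℤ) : ℂ) / (R : ℂ))
      = (k : ℂ) * (2 * (Real.pi : ℂ) * Complex.I) by push_cast; field_simp]
  exact Complex.exp_int_mul_two_pi_mul_I k

lemma hm_apply (R : ℤ) (S T : Finset ℤ) (s : S) (t : T) :
    hadamardMatrix R S T s t = ((1 / Real.sqrt S.card : ℝ) : ℂ) * ch R (s * t) := by
  rw [hadamardMatrix, ch]
  congr 1
  push_cast
  ring

lemma coeff_sq (S : Finset ℤ) :
    ((1 / Real.sqrt S.card : ℝ) : ℂ) * ((1 / Real.sqrt S.card : ℝ) : ℂ)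
      = (S.card : ℂ)⁻¹ := by
  rw [← Complex.ofReal_mul]
  rw [show (1 / Real.sqrt S.card * (1 / Real.sqrt S.card) : ℝ)
      = (Real.sqrt S.card * Real.sqrt S.card)⁻¹ by rw [one_div_mul_one_div]; rw [one_div]]
  rw [Real.mul_self_sqrt (Nat.cast_nonneg _)]
  simp

lemma entry_mul_conjT (R : ℤ) (S T : Finset ℤ) (s s' : S) :
    (hadamardMatrix R S T * (hadamardMatrix R S T)ᴴ) s s'
      = (S.card : ℂ)⁻¹ * ∑ t ∈ T, ch R (((s : ℤ) - (s' : ℤ)) * t) := by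
  rw [Matrix.mul_apply]
  have key : ∀ t : T, hadamardMatrix R S T s t * (hadamardMatrix R S T)ᴴ t s'
      = (S.card : ℂ)⁻¹ * ch R (((s : ℤ) - (s' : ℤ)) * (t : ℤ)) := by
    intro t
    rw [Matrix.conjTranspose_apply, hm_apply, hm_apply, star_mul', star_ch,
      Complex.star_def, Complex.conj_ofReal]
    rw [show ((1 / Real.sqrt S.card : ℝ) : ℂ) * ch R ((s : ℤ) * t)
        * (((1 / Real.sqrt S.card : ℝ) : ℂ) * ch R (-((s' : ℤ) * t)))
        = (((1 / Real.sqrt S.card : ℝ) : ℂ) * ((1 / Real.sqrt S.card : ℝ) : ℂ))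
          * (ch R ((s : ℤ) * t) * ch R (-((s' : ℤ) * t))) by ring]
    rw [coeff_sq, ← ch_add]
    congr 2
    ring
  rw [Finset.sum_congr rfl (fun t _ => key t), ← Finset.mul_sum]
  rw [Finset.sum_coe_sort T (fun z => ch R (((s : ℤ) - (s' : ℤ)) * z))]

lemma entry_conjT_mul (R : ℤ) (S T : Finset ℤ) (t t' : T) :
    ((hadamardMatrix R S T)ᴴ * hadamardMatrix R S T) t t'
      = (S.card : ℂ)⁻¹ * ∑ s ∈ S, ch R (s * ((t' : ℤ) - (t : ℤ))) := by
  rw [Matrix.mul_apply]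
  have key : ∀ s : S, (hadamardMatrix R S T)ᴴ t s * hadamardMatrix R S T s t'
      = (S.card : ℂ)⁻¹ * ch R ((s : ℤ) * ((t' : ℤ) - (t : ℤ))) := by
    intro s
    rw [Matrix.conjTranspose_apply, hm_apply, hm_apply, star_mul', star_ch,
      Complex.star_def, Complex.conj_ofReal]
    rw [show ((1 / Real.sqrt S.card : ℝ) : ℂ) * ch R (-((s : ℤ) * t))
        * (((1 / Real.sqrt S.card : ℝ) : ℂ) * ch R ((s : ℤ) * t'))
        = (((1 / Real.sqrt S.card : ℝ) : ℂ) * ((1 / Real.sqrt S.card : ℝ) : ℂ))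
          * (ch R (-((s : ℤ) * t)) * ch R ((s : ℤ) * t')) by ring]
    rw [coeff_sq, ← ch_add]
    congr 2
    ring
  rw [Finset.sum_congr rfl (fun s _ => key s), ← Finset.mul_sum]
  rw [Finset.sum_coe_sort S (fun z => ch R (z * ((t' : ℤ) - (t : ℤ))))]

lemma one_apply_sub (S : Finset ℤ) (a b : S) :
    (1 : Matrix S S ℂ) a b = if (a : ℤ) = (b : ℤ) then 1 else 0 := by
  rw [Matrix.one_apply]
  exact if_congr Subtype.ext_iff rfl rfl

lemma row_orth {R : ℤ} {B L : Finset ℤ} (hp : IsHadamardPair R B L)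
    {b b' : ℤ} (hb : b ∈ B) (hb' : b' ∈ B) :
    ∑ l ∈ L, ch R ((b - b') * l) = if b = b' then (B.card : ℂ) else 0 := by
  have hN : (B.card : ℂ) ≠ 0 := by
    exact_mod_cast Nat.cast_ne_zero.mpr (Finset.card_ne_zero_of_mem hp.2.1)
  have h1 := congrFun (congrFun hp.2.2.2.2.1 ⟨b, hb⟩) ⟨b', hb'⟩
  rw [entry_mul_conjT, one_apply_sub] at h1
  simp only at h1
  have h2 : (B.card : ℂ) * ((B.card : ℂ)⁻¹ * ∑ l ∈ L, ch R ((b - b') * l))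
      = ∑ l ∈ L, ch R ((b - b') * l) := by
    rw [← mul_assoc, mul_inv_cancel₀ hN, one_mul]
  rw [h1, mul_ite, mul_one, mul_zero] at h2
  exact h2.symm

lemma col_orth {R : ℤ} {B L : Finset ℤ} (hp : IsHadamardPair R B L)
    {l l' : ℤ} (hl : l ∈ L) (hl' : l' ∈ L) :
    ∑ b ∈ B, ch R (b * (l' - l)) = if l = l' then (B.card : ℂ) else 0 := by
  have hN : (B.card : ℂ) ≠ 0 := by
    exact_mod_cast Nat.cast_ne_zero.mpr (Finset.card_ne_zero_of_mem hp.2.1)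
  have h1 := congrFun (congrFun hp.2.2.2.2.2 ⟨l, hl⟩) ⟨l', hl'⟩
  rw [entry_conjT_mul, one_apply_sub] at h1
  simp only at h1
  have h2 : (B.card : ℂ) * ((B.card : ℂ)⁻¹ * ∑ b ∈ B, ch R (b * (l' - l)))
      = ∑ b ∈ B, ch R (b * (l' - l)) := by
    rw [← mul_assoc, mul_inv_cancel₀ hN, one_mul]
  rw [h1, mul_ite, mul_one, mul_zero] at h2
  exact h2.symm

lemma add_inj {A A' : Finset ℤ} (hd : HasDisjointDiffs A A')
    {a b : ℤ} (ha : a ∈ A) (hb : b ∈ A) {a' b' : ℤ} (ha' : a' ∈ A') (hb' : b' ∈ A')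
    (hsum : a + a' = b + b') : a = b ∧ a' = b' := by
  have h1 : a - b ∈ (A - A) ∩ (A' - A') := by
    rw [Finset.mem_inter]
    refine ⟨Finset.sub_mem_sub ha hb, ?_⟩
    rw [show a - b = b' - a' by omega]
    exact Finset.sub_mem_sub hb' ha'
  rw [hd, Finset.mem_singleton] at h1
  omega

lemma sum_add_disj {A A' : Finset ℤ} (hd : HasDisjointDiffs A A') (φ : ℤ → ℂ) :
    ∑ x ∈ A + A', φ x = ∑ a ∈ A, ∑ b ∈ A', φ (a + b) := by
  rw [Finset.add_def, Finset.sum_image, Finset.sum_product]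
  intro p hp q hq hpq
  rw [Finset.mem_coe, Finset.mem_product] at hp hq
  obtain ⟨h1, h2⟩ := add_inj hd hp.1 hq.1 hp.2 hq.2 hpq
  exact Prod.ext h1 h2

lemma card_add_disj {A A' : Finset ℤ} (hd : HasDisjointDiffs A A') :
    (A + A').card = A.card * A'.card := by
  rw [Finset.add_def, Finset.card_image_of_injOn, Finset.card_product]
  intro p hp q hq hpq
  rw [Finset.mem_coe, Finset.mem_product] at hp hq
  obtain ⟨h1, h2⟩ := add_inj hd hp.1 hq.1 hp.2 hq.2 hpq
  exact Prod.ext h1 h2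

end Aux

/-- If `(B, L)` and `(F, G)` are Hadamard pairs with the same scaling
factor `R` and `R ∣ b·g` for all `b ∈ B`, `g ∈ G`, then the sums `B + F` and `L + G` are
direct and `(B ⊕ F, L ⊕ G)` is a Hadamard pair with scaling factor `R`. -/
theorem hadamard_pair_direct_sum (R : ℤ) (B L F G : Finset ℤ)
    (hBL : IsHadamardPair R B L) (hFG : IsHadamardPair R F G)
    (h : ∀ b ∈ B, ∀ g ∈ G, R ∣ b * g) :
    HasDisjointDiffs B F ∧ HasDisjointDiffs L G ∧ IsHadamardPair R (B + F) (L + G) := by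
  have hR0 : R ≠ 0 := by have := hBL.1; omega
  have hNB : B.card ≠ 0 := Finset.card_ne_zero_of_mem hBL.2.1
  have hNF : F.card ≠ 0 := Finset.card_ne_zero_of_mem hFG.2.1
  have hNG : G.card ≠ 0 := Finset.card_ne_zero_of_mem hFG.2.2.1
  -- B and F have disjoint differences
  have hdBF : HasDisjointDiffs B F := by
    rw [HasDisjointDiffs]
    ext x
    simp only [Finset.mem_inter, Finset.mem_sub, Finset.mem_singleton]
    constructor
    · rintro ⟨⟨b, hb, b', hb', hx1⟩, ⟨f, hf, f', hf', hx2⟩⟩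
      have key := row_orth hFG hf hf'
      have hall : ∀ g ∈ G, ch R ((f - f') * g) = 1 := by
        intro g hg
        apply ch_dvd R _ hR0
        rw [show (f - f') * g = b * g - b' * g by rw [hx2, ← hx1]; ring]
        exact dvd_sub (h b hb g hg) (h b' hb' g hg)
      rw [Finset.sum_congr rfl hall, Finset.sum_const, nsmul_eq_mul, mul_one] at key
      split_ifs at key with hff
      · omega
      · exact absurd (by exact_mod_cast key : G.card = 0) hNG
    · rintro rfl
      exact ⟨⟨0, hBL.2.1, 0, hBL.2.1, sub_self 0⟩, ⟨0, hFG.2.1, 0, hFG.2.1, sub_self 0⟩⟩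
  -- L and G have disjoint differences
  have hdLG : HasDisjointDiffs L G := by
    rw [HasDisjointDiffs]
    ext x
    simp only [Finset.mem_inter, Finset.mem_sub, Finset.mem_singleton]
    constructor
    · rintro ⟨⟨l, hl, l', hl', hx1⟩, ⟨g, hg, g', hg', hx2⟩⟩
      have key := col_orth hBL hl hl'
      have hall : ∀ b ∈ B, ch R (b * (l' - l)) = 1 := by
        intro b hb
        apply ch_dvd R _ hR0
        rw [show b * (l' - l) = b * g' - b * g by
          rw [show l' - l = g' - g by omega]; ring]
        exact dvd_sub (h b hb g' hg') (h b hb g hg)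
      rw [Finset.sum_congr rfl hall, Finset.sum_const, nsmul_eq_mul, mul_one] at key
      split_ifs at key with hll
      · omega
      · exact absurd (by exact_mod_cast key : B.card = 0) hNB
    · rintro rfl
      exact ⟨⟨0, hBL.2.2.1, 0, hBL.2.2.1, sub_self 0⟩,
        ⟨0, hFG.2.2.1, 0, hFG.2.2.1, sub_self 0⟩⟩
  refine ⟨hdBF, hdLG, ?_⟩
  have h0BF : (0 : ℤ) ∈ B + F := by
    have := Finset.add_mem_add hBL.2.1 hFG.2.1; simpa using this
  have h0LG : (0 : ℤ) ∈ L + G := by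
    have := Finset.add_mem_add hBL.2.2.1 hFG.2.2.1; simpa using this
  have hcard : (B + F).card = (L + G).card := by
    rw [card_add_disj hdBF, card_add_disj hdLG, hBL.2.2.2.1, hFG.2.2.2.1]
  have hKcard : (B + F).card = B.card * F.card := card_add_disj hdBF
  have hU1 : hadamardMatrix R (B + F) (L + G) * (hadamardMatrix R (B + F) (L + G))ᴴ = 1 := by
    ext s s'
    rw [entry_mul_conjT, one_apply_sub]
    obtain ⟨b, hb, f, hf, hs⟩ := Finset.mem_add.mp s.2
    obtain ⟨b', hb', f', hf', hs'⟩ := Finset.mem_add.mp s'.2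
    rw [← hs, ← hs', sum_add_disj hdLG]
    have inner : ∀ l ∈ L, ∀ g ∈ G, ch R ((b + f - (b' + f')) * (l + g))
        = ch R (((b - b') + (f - f')) * l) * ch R ((f - f') * g) := by
      intro l hl g hg
      rw [show (b + f - (b' + f')) * (l + g)
          = (((b - b') + (f - f')) * l + (f - f') * g) + (b * g - b' * g) by ring]
      rw [ch_add, ch_add, ch_dvd R _ hR0 (dvd_sub (h b hb g hg) (h b' hb' g hg)), mul_one]
    have step1 : ∑ l ∈ L, ∑ g ∈ G, ch R ((b + f - (b' + f')) * (l + g))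
        = (∑ l ∈ L, ch R (((b - b') + (f - f')) * l)) * (∑ g ∈ G, ch R ((f - f') * g)) := by
      rw [Finset.sum_mul_sum]
      exact Finset.sum_congr rfl fun l hl => Finset.sum_congr rfl fun g hg => inner l hl g hg
    rw [step1, row_orth hFG hf hf']
    by_cases hff : f = f'
    · subst hff
      rw [if_pos rfl]
      rw [show (b - b') + (f - f) = b - b' by ring]
      rw [row_orth hBL hb hb']
      by_cases hbb : b = b'
      · subst hbb
        rw [if_pos rfl, if_pos rfl, hKcard]
        push_cast
        exact inv_mul_cancel₀
          (mul_ne_zero (Nat.cast_ne_zero.mpr hNB) (Nat.cast_ne_zero.mpr hNF))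
      · rw [if_neg hbb, if_neg (by omega : ¬(b + f = b' + f)), zero_mul, mul_zero]
    · rw [if_neg hff, mul_zero, mul_zero]
      rw [if_neg (fun hc => hff (add_inj hdBF hb hb' hf hf' hc).2)]
  have e : (↥(B + F)) ≃ (↥(L + G)) :=
    Fintype.equivOfCardEq (by rw [Fintype.card_coe, Fintype.card_coe, hcard])
  exact ⟨hBL.1, h0BF, h0LG, hcard, hU1, (Matrix.mul_eq_one_comm_of_equiv e).mp hU1⟩
end
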